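/- Let ℓ ≥ 1 and let M₁, M₂, M₃ be real symmetric positive semidefinite ℓ×ℓ matrices such that B(M₁,M₂,M₃) is nonempty. Then the feasible set F(M₁,M₂,M₃) is nonempty. -/

import Mathlib

open Matrix

noncomputable section

/-- The `3ℓ×ℓ` block matrix `[I_ℓ; I_ℓ; −I_ℓ]`. -/
def Wmat (l : ℕ) : Matrix (Fin (3*l)) (Fin l) ℝ :=
  Matrix.of fun i j =>
    (if (i : ℕ) = (j : ℕ) then 1 else 0) + (if (i : ℕ) = l + (j : ℕ) then 1 else 0)
      - (if (i : ℕ) = 2*l + (j : ℕ) then 1 else 0)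

/-- Membership in the set `B(M₁,M₂,M₃)`. -/
def Bset (l : ℕ) (M1 M2 M3 : Matrix (Fin l) (Fin l) ℝ)
    (X : Matrix (Fin (3*l)) (Fin (3*l)) ℝ) : Prop :=
  X.PosSemidef ∧
  (∀ i j : Fin l, X ⟨(i : ℕ), by omega⟩ ⟨(j : ℕ), by omega⟩ = M1 i j) ∧
  (∀ i j : Fin l, X ⟨l + (i : ℕ), by omega⟩ ⟨l + (j : ℕ), by omega⟩ = M2 i j) ∧
  (∀ i j : Fin l, X ⟨2*l + (i : ℕ), by omega⟩ ⟨2*l + (j : ℕ), by omega⟩ = M3 i j) ∧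
  (Wmat l)ᵀ * X * (Wmat l) = 0

/-- The `6ℓ×ℓ` block matrix `V = [−I_ℓ; −I_ℓ; −I_ℓ; I_ℓ; I_ℓ; −I_ℓ]`. -/
def Vmat (l : ℕ) : Matrix (Fin (6*l)) (Fin l) ℝ :=
  Matrix.of fun i j =>
    -(if (i : ℕ) = (j : ℕ) then 1 else 0) - (if (i : ℕ) = l + (j : ℕ) then 1 else 0)
    - (if (i : ℕ) = 2*l + (j : ℕ) then 1 else 0) + (if (i : ℕ) = 3*l + (j : ℕ) then 1 else 0)
    + (if (i : ℕ) = 4*l + (j : ℕ) then 1 else 0) - (if (i : ℕ) = 5*l + (j : ℕ) then 1 else 0)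

/-- Membership in the feasible set `F(M₁,M₂,M₃)`. -/
def Fset (l : ℕ) (M1 M2 M3 : Matrix (Fin l) (Fin l) ℝ)
    (X : Matrix (Fin (6*l)) (Fin (6*l)) ℝ) : Prop :=
  X.PosSemidef ∧
  (∀ i j : Fin (3*l), X ⟨(i : ℕ), by omega⟩ ⟨(j : ℕ), by omega⟩ = if i = j then (1:ℝ) else 0) ∧
  (∀ (i : Fin l) (j : Fin (2*l)), X ⟨3*l + (i : ℕ), by omega⟩ ⟨l + (j : ℕ), by omega⟩ = 0) ∧
  (∀ i j : Fin l, X ⟨4*l + (i : ℕ), by omega⟩ ⟨(j : ℕ), by omega⟩ = 0) ∧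
  (∀ i j : Fin l, X ⟨4*l + (i : ℕ), by omega⟩ ⟨2*l + (j : ℕ), by omega⟩ = 0) ∧
  (∀ (i : Fin l) (j : Fin (2*l)), X ⟨5*l + (i : ℕ), by omega⟩ ⟨(j : ℕ), by omega⟩ = 0) ∧
  (∀ i j : Fin l, X ⟨3*l + (i : ℕ), by omega⟩ ⟨3*l + (j : ℕ), by omega⟩
      = (if i = j then (1:ℝ) else 0) + M1 i j) ∧
  (∀ i j : Fin l, X ⟨4*l + (i : ℕ), by omega⟩ ⟨4*l + (j : ℕ), by omega⟩
      = (if i = j then (1:ℝ) else 0) + M2 i j) ∧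
  (∀ i j : Fin l, X ⟨5*l + (i : ℕ), by omega⟩ ⟨5*l + (j : ℕ), by omega⟩
      = (if i = j then (1:ℝ) else 0) + M3 i j) ∧
  (Vmat l)ᵀ * X * (Vmat l) = 0

/-- Sum of an indicator times a function. -/
lemma sum_indic_mul {n : ℕ} (a : ℕ) (h : a < n) (c : ℝ) (f : Fin n → ℝ) :
    ∑ k : Fin n, (if (k : ℕ) = a then c else 0) * f k = c * f ⟨a, h⟩ := by
  rw [Finset.sum_eq_single (⟨a, h⟩ : Fin n)]
  · simp
  · intro b _ hb
    rw [if_neg, zero_mul]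
    intro hc
    exact hb (Fin.ext hc)
  · simp

/-- The Gram factor `L`. -/
def Lmat (l : ℕ) (S : Matrix (Fin (3*l)) (Fin (3*l)) ℝ) :
    Matrix (Fin (6*l)) (Fin (3*l) ⊕ Fin (3*l)) ℝ :=
  fun i k =>
    match k with
    | Sum.inl k =>
        (if (i : ℕ) = (k : ℕ) then 1 else 0)
        + (if (i : ℕ) = 3*l + (k : ℕ) ∧ (k : ℕ) < 2*l then 1 else 0)
        - (if (i : ℕ) = 3*l + (k : ℕ) ∧ 2*l ≤ (k : ℕ) then 1 else 0)
    | Sum.inr k =>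
        if h : 3*l ≤ (i : ℕ) then S ⟨(i : ℕ) - 3*l, by have := i.isLt; omega⟩ k else 0

section RowLemmas

variable (l : ℕ) (S : Matrix (Fin (3*l)) (Fin (3*l)) ℝ)

lemma Lmat_low_inl (m : ℕ) (hm : m < 3*l) (h6 : m < 6*l) (k : Fin (3*l)) :
    Lmat l S ⟨m, h6⟩ (Sum.inl k) = if (k : ℕ) = m then 1 else 0 := by
  have hk := k.isLt
  simp only [Lmat]
  split_ifs <;> first | ring1 | omega | (exfalso; omega)

lemma Lmat_low_inr (m : ℕ) (hm : m < 3*l) (h6 : m < 6*l) (k : Fin (3*l)) :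
    Lmat l S ⟨m, h6⟩ (Sum.inr k) = 0 := by
  simp only [Lmat]
  rw [dif_neg (by omega)]

lemma Lmat4_inl (a : ℕ) (ha : a < l) (h6 : 3*l + a < 6*l) (k : Fin (3*l)) :
    Lmat l S ⟨3*l + a, h6⟩ (Sum.inl k) = if (k : ℕ) = a then 1 else 0 := by
  have hk := k.isLt
  simp only [Lmat]
  split_ifs <;> first | ring1 | omega | (exfalso; omega)

lemma Lmat4_inr (a : ℕ) (ha : a < l) (h6 : 3*l + a < 6*l) (k : Fin (3*l)) :
    Lmat l S ⟨3*l + a, h6⟩ (Sum.inr k) = S ⟨a, by omega⟩ k := by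
  simp only [Lmat]
  rw [dif_pos (by omega)]
  congr 1
  exact Fin.ext (by simp)

lemma Lmat5_inl (a : ℕ) (ha : a < l) (h6 : 4*l + a < 6*l) (k : Fin (3*l)) :
    Lmat l S ⟨4*l + a, h6⟩ (Sum.inl k) = if (k : ℕ) = l + a then 1 else 0 := by
  have hk := k.isLt
  simp only [Lmat]
  split_ifs <;> first | ring1 | omega | (exfalso; omega)

lemma Lmat5_inr (a : ℕ) (ha : a < l) (h6 : 4*l + a < 6*l) (k : Fin (3*l)) :
    Lmat l S ⟨4*l + a, h6⟩ (Sum.inr k) = S ⟨l + a, by omega⟩ k := by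
  simp only [Lmat]
  rw [dif_pos (by omega)]
  congr 1
  exact Fin.ext (by simp; omega)

lemma Lmat6_inl (a : ℕ) (ha : a < l) (h6 : 5*l + a < 6*l) (k : Fin (3*l)) :
    Lmat l S ⟨5*l + a, h6⟩ (Sum.inl k) = if (k : ℕ) = 2*l + a then -1 else 0 := by
  have hk := k.isLt
  simp only [Lmat]
  split_ifs <;> first | ring1 | omega | (exfalso; omega)

lemma Lmat6_inr (a : ℕ) (ha : a < l) (h6 : 5*l + a < 6*l) (k : Fin (3*l)) :
    Lmat l S ⟨5*l + a, h6⟩ (Sum.inr k) = S ⟨2*l + a, by omega⟩ k := by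
  simp only [Lmat]
  rw [dif_pos (by omega)]
  congr 1
  exact Fin.ext (by simp; omega)

end RowLemmas

lemma sum_W (l : ℕ) (j : Fin l) (f : Fin (3*l) → ℝ) :
    ∑ i : Fin (3*l), Wmat l i j * f i
      = f ⟨(j : ℕ), by have := j.isLt; omega⟩ + f ⟨l + (j : ℕ), by have := j.isLt; omega⟩
        - f ⟨2*l + (j : ℕ), by have := j.isLt; omega⟩ := by
  have hj := j.isLt
  have : ∀ i : Fin (3*l), Wmat l i j * f i
      = (if (i : ℕ) = (j : ℕ) then (1:ℝ) else 0) * f i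
        + (if (i : ℕ) = l + (j : ℕ) then (1:ℝ) else 0) * f i
        + (if (i : ℕ) = 2*l + (j : ℕ) then (-1:ℝ) else 0) * f i := by
    intro i
    simp only [Wmat, Matrix.of_apply]
    split_ifs <;> ring
  rw [Finset.sum_congr rfl (fun i _ => this i)]
  rw [Finset.sum_add_distrib, Finset.sum_add_distrib,
    sum_indic_mul (j : ℕ) (by omega) 1 f, sum_indic_mul (l + (j : ℕ)) (by omega) 1 f,
    sum_indic_mul (2*l + (j : ℕ)) (by omega) (-1) f]
  ring

lemma sum_V (l : ℕ) (j : Fin l) (f : Fin (6*l) → ℝ) :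
    ∑ i : Fin (6*l), Vmat l i j * f i
      = -f ⟨(j : ℕ), by have := j.isLt; omega⟩ - f ⟨l + (j : ℕ), by have := j.isLt; omega⟩
        - f ⟨2*l + (j : ℕ), by have := j.isLt; omega⟩
        + f ⟨3*l + (j : ℕ), by have := j.isLt; omega⟩
        + f ⟨4*l + (j : ℕ), by have := j.isLt; omega⟩
        - f ⟨5*l + (j : ℕ), by have := j.isLt; omega⟩ := by
  have hj := j.isLt
  have : ∀ i : Fin (6*l), Vmat l i j * f i
      = (if (i : ℕ) = (j : ℕ) then (-1:ℝ) else 0) * f i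
        + (if (i : ℕ) = l + (j : ℕ) then (-1:ℝ) else 0) * f i
        + (if (i : ℕ) = 2*l + (j : ℕ) then (-1:ℝ) else 0) * f i
        + (if (i : ℕ) = 3*l + (j : ℕ) then (1:ℝ) else 0) * f i
        + (if (i : ℕ) = 4*l + (j : ℕ) then (1:ℝ) else 0) * f i
        + (if (i : ℕ) = 5*l + (j : ℕ) then (-1:ℝ) else 0) * f i := by
    intro i
    simp only [Vmat, Matrix.of_apply]
    split_ifs <;> ring
  rw [Finset.sum_congr rfl (fun i _ => this i)]
  rw [Finset.sum_add_distrib, Finset.sum_add_distrib, Finset.sum_add_distrib,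
    Finset.sum_add_distrib, Finset.sum_add_distrib,
    sum_indic_mul (j : ℕ) (by omega) (-1) f, sum_indic_mul (l + (j : ℕ)) (by omega) (-1) f,
    sum_indic_mul (2*l + (j : ℕ)) (by omega) (-1) f,
    sum_indic_mul (3*l + (j : ℕ)) (by omega) 1 f,
    sum_indic_mul (4*l + (j : ℕ)) (by omega) 1 f,
    sum_indic_mul (5*l + (j : ℕ)) (by omega) (-1) f]
  ring

/-- If `B(M₁,M₂,M₃)` is nonempty, then the feasible set `F(M₁,M₂,M₃)` is nonempty. -/
theorem Fset_nonempty (l : ℕ) (hl : 1 ≤ l)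
    (M1 M2 M3 : Matrix (Fin l) (Fin l) ℝ)
    (hM1 : M1.PosSemidef) (hM2 : M2.PosSemidef) (hM3 : M3.PosSemidef)
    (h : ∃ X, Bset l M1 M2 M3 X) :
    ∃ X, Fset l M1 M2 M3 X := by
  obtain ⟨Y, hYpsd, hB1, hB2, hB3, hBW⟩ := h
  open MatrixOrder in set S := CFC.sqrt Y with hSdef
  open MatrixOrder in have hSS : S * S = Y := CFC.sqrt_mul_sqrt_self Y hYpsd.nonneg
  open MatrixOrder in have hSH : S.IsHermitian := (CFC.sqrt_nonneg Y).posSemidef.1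
  have hSsymm : ∀ p q, S p q = S q p := by
    intro p q
    have := congrFun (congrFun hSH p) q
    simpa [Matrix.conjTranspose_apply] using this.symm
  have hST : Sᵀ = S := by
    ext i j; exact hSsymm j i
  have hSG : ∀ p q, (∑ k : Fin (3*l), S p k * S q k) = Y p q := by
    intro p q
    rw [← hSS, Matrix.mul_apply]
    exact Finset.sum_congr rfl fun k _ => by rw [hSsymm q k]
  -- S * W = 0
  have hW0 : S * Wmat l = 0 := by
    apply Matrix.conjTranspose_mul_self_eq_zero.mp
    rw [Matrix.conjTranspose_mul, hSH]
    have hWH : (Wmat l)ᴴ = (Wmat l)ᵀ := by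
      ext i j; simp [Matrix.conjTranspose_apply]
    rw [hWH]
    calc (Wmat l)ᵀ * S * (S * Wmat l) = (Wmat l)ᵀ * (S * S) * Wmat l := by
          rw [Matrix.mul_assoc, Matrix.mul_assoc, Matrix.mul_assoc]
      _ = 0 := by rw [hSS]; exact hBW
  have hWS : (Wmat l)ᵀ * S = 0 := by
    have := congrArg Matrix.transpose hW0
    rwa [Matrix.transpose_mul, hST, Matrix.transpose_zero] at this
  have hWSe : ∀ (j : Fin l) (k : Fin (3*l)),
      S ⟨(j : ℕ), by have := j.isLt; omega⟩ k + S ⟨l + (j : ℕ), by have := j.isLt; omega⟩ k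
        - S ⟨2*l + (j : ℕ), by have := j.isLt; omega⟩ k = 0 := by
    intro j k
    have h0 := congrFun (congrFun hWS j) k
    rw [Matrix.mul_apply] at h0
    simp only [Matrix.transpose_apply, Matrix.zero_apply] at h0
    rwa [sum_W l j (fun i => S i k)] at h0
  -- entry expansion of the Gram matrix
  have hXe : ∀ p q : Fin (6*l), (Lmat l S * (Lmat l S)ᴴ) p q
      = (∑ k : Fin (3*l), Lmat l S p (Sum.inl k) * Lmat l S q (Sum.inl k))
        + ∑ k : Fin (3*l), Lmat l S p (Sum.inr k) * Lmat l S q (Sum.inr k) := by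
    intro p q
    rw [Matrix.mul_apply, Fintype.sum_sum_type]
    simp [Matrix.conjTranspose_apply]
  refine ⟨Lmat l S * (Lmat l S)ᴴ,
    Matrix.posSemidef_self_mul_conjTranspose (Lmat l S), ?_, ?_, ?_, ?_, ?_, ?_, ?_, ?_, ?_⟩
  · -- identity top-left block
    intro i j
    have hi := i.isLt; have hj := j.isLt
    rw [hXe]
    simp only [Lmat_low_inl l S (i:ℕ) hi, Lmat_low_inl l S (j:ℕ) hj,
      Lmat_low_inr l S (i:ℕ) hi, Lmat_low_inr l S (j:ℕ) hj, mul_zero,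
      Finset.sum_const_zero, add_zero]
    rw [sum_indic_mul (i:ℕ) (by omega) 1]
    simp [Fin.ext_iff, eq_comm]
  · -- block (4, cols 2-3) zero
    intro i j
    have hi := i.isLt; have hj := j.isLt
    rw [hXe]
    simp only [Lmat4_inl l S (i:ℕ) hi, Lmat4_inr l S (i:ℕ) hi,
      Lmat_low_inl l S (l + (j:ℕ)) (by omega), Lmat_low_inr l S (l + (j:ℕ)) (by omega),
      mul_zero, Finset.sum_const_zero, add_zero]
    rw [sum_indic_mul (i:ℕ) (by omega) 1]
    have : ¬ ((i:ℕ) = l + (j:ℕ)) := by omega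
    simp [this]
  · -- block (5, col 1) zero
    intro i j
    have hi := i.isLt; have hj := j.isLt
    rw [hXe]
    simp only [Lmat5_inl l S (i:ℕ) hi, Lmat5_inr l S (i:ℕ) hi,
      Lmat_low_inl l S (j:ℕ) (by omega), Lmat_low_inr l S (j:ℕ) (by omega),
      mul_zero, Finset.sum_const_zero, add_zero]
    rw [sum_indic_mul (l + (i:ℕ)) (by omega) 1]
    have : ¬ (l + (i:ℕ) = (j:ℕ)) := by omega
    simp [this]
  · -- block (5, col 3) zero
    intro i j
    have hi := i.isLt; have hj := j.isLt
    rw [hXe]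
    simp only [Lmat5_inl l S (i:ℕ) hi, Lmat5_inr l S (i:ℕ) hi,
      Lmat_low_inl l S (2*l + (j:ℕ)) (by omega), Lmat_low_inr l S (2*l + (j:ℕ)) (by omega),
      mul_zero, Finset.sum_const_zero, add_zero]
    rw [sum_indic_mul (l + (i:ℕ)) (by omega) 1]
    have : ¬ (l + (i:ℕ) = 2*l + (j:ℕ)) := by omega
    simp [this]
  · -- block (6, cols 1-2) zero
    intro i j
    have hi := i.isLt; have hj := j.isLt
    rw [hXe]
    simp only [Lmat6_inl l S (i:ℕ) hi, Lmat6_inr l S (i:ℕ) hi,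
      Lmat_low_inl l S (j:ℕ) (by omega), Lmat_low_inr l S (j:ℕ) (by omega),
      mul_zero, Finset.sum_const_zero, add_zero]
    rw [sum_indic_mul (2*l + (i:ℕ)) (by omega) (-1)]
    have : ¬ (2*l + (i:ℕ) = (j:ℕ)) := by omega
    simp [this]
  · -- block (4,4)
    intro i j
    have hi := i.isLt; have hj := j.isLt
    rw [hXe]
    simp only [Lmat4_inl l S (i:ℕ) hi, Lmat4_inr l S (i:ℕ) hi,
      Lmat4_inl l S (j:ℕ) hj, Lmat4_inr l S (j:ℕ) hj]
    rw [sum_indic_mul (i:ℕ) (by omega) 1, hSG, hB1]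
    have hiff : ((i:ℕ) = (j:ℕ)) ↔ i = j := by rw [Fin.ext_iff]
    simp only [Fin.val_mk ,hiff, one_mul]
  · -- block (5,5)
    intro i j
    have hi := i.isLt; have hj := j.isLt
    rw [hXe]
    simp only [Lmat5_inl l S (i:ℕ) hi, Lmat5_inr l S (i:ℕ) hi,
      Lmat5_inl l S (j:ℕ) hj, Lmat5_inr l S (j:ℕ) hj]
    rw [sum_indic_mul (l + (i:ℕ)) (by omega) 1, hSG, hB2]
    have hiff : (l + (i:ℕ) = l + (j:ℕ)) ↔ i = j := by rw [Fin.ext_iff]; omega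
    simp only [Fin.val_mk, hiff, one_mul]
  · -- block (6,6)
    intro i j
    have hi := i.isLt; have hj := j.isLt
    rw [hXe]
    simp only [Lmat6_inl l S (i:ℕ) hi, Lmat6_inr l S (i:ℕ) hi,
      Lmat6_inl l S (j:ℕ) hj, Lmat6_inr l S (j:ℕ) hj]
    rw [sum_indic_mul (2*l + (i:ℕ)) (by omega) (-1), hSG, hB3]
    have hiff : (2*l + (i:ℕ) = 2*l + (j:ℕ)) ↔ i = j := by rw [Fin.ext_iff]; omega
    simp only [Fin.val_mk, hiff]
    split_ifs <;> ring
  · -- V-kernel condition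
    have hVL : (Vmat l)ᵀ * Lmat l S = 0 := by
      ext j c
      rw [Matrix.mul_apply]
      simp only [Matrix.transpose_apply, Matrix.zero_apply]
      rw [sum_V l j (fun i => Lmat l S i c)]
      have hj := j.isLt
      match c with
      | Sum.inl k =>
        simp only [Lmat_low_inl l S (j:ℕ) (by omega), Lmat_low_inl l S (l + (j:ℕ)) (by omega),
          Lmat_low_inl l S (2*l + (j:ℕ)) (by omega), Lmat4_inl l S (j:ℕ) hj,
          Lmat5_inl l S (j:ℕ) hj, Lmat6_inl l S (j:ℕ) hj]
        split_ifs <;> ring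
      | Sum.inr k =>
        simp only [Lmat_low_inr l S (j:ℕ) (by omega), Lmat_low_inr l S (l + (j:ℕ)) (by omega),
          Lmat_low_inr l S (2*l + (j:ℕ)) (by omega), Lmat4_inr l S (j:ℕ) hj,
          Lmat5_inr l S (j:ℕ) hj, Lmat6_inr l S (j:ℕ) hj]
        have hk := hWSe j k
        linarith [hWSe j k]
    have hassoc : (Vmat l)ᵀ * (Lmat l S * (Lmat l S)ᴴ)
        = ((Vmat l)ᵀ * Lmat l S) * (Lmat l S)ᴴ := (Matrix.mul_assoc _ _ _).symm
    rw [hassoc, hVL, Matrix.zero_mul, Matrix.zero_mul]
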